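/- For every ε ∈ F with ε ≠ 0, one has the matrix identity x₊(0, 1) · x₋(1, 1 + ε^θ) · x₊(ε^{1−2θ}, ε^{−θ}) = h(ε) · x₋(ε^{2θ−1}·(1 + ε^{2θ−1}), ε + ε^θ + ε^{2θ}) in GL(4,F). -/

import Mathlib

open Matrix Pointwise

/-- The Suzuki unipotent `x₊(t,u)` as a 4×4 matrix. -/
def suzXp {F : Type*} [Field F] (θ : ℕ) (t u : F) : Matrix (Fin 4) (Fin 4) F :=
  !![1, t ^ θ, u, t ^ (2 * θ + 1) + t ^ θ * u + u ^ (2 * θ);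
     0, 1, t, t ^ (θ + 1) + u;
     0, 0, 1, t ^ θ;
     0, 0, 0, 1]

/-- The antidiagonal permutation matrix `w` (1-indexed: entry 1 iff i+j = 5). -/
def suzW {F : Type*} [Field F] : Matrix (Fin 4) (Fin 4) F :=
  Matrix.of fun i j => if (i : ℕ) + (j : ℕ) = 3 then 1 else 0

/-- The torus element `h(ε) = diag(ε, ε^{2θ-1}, ε^{1-2θ}, ε⁻¹)`. -/
def suzH {F : Type*} [Field F] (θ : ℕ) (ε : F) : Matrix (Fin 4) (Fin 4) F :=
  Matrix.diagonal ![ε, ε ^ (2 * (θ : ℤ) - 1), ε ^ (1 - 2 * (θ : ℤ)), ε⁻¹]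

/-- The opposite unipotent `x₋(t,u) = w·x₊(t,u)·w`. -/
def suzXm {F : Type*} [Field F] (θ : ℕ) (t u : F) : Matrix (Fin 4) (Fin 4) F :=
  suzW * suzXp θ t u * suzW

/-- `U = {x₊(t,u)}` viewed as a subset of `GL(4,F)`. -/
def suzU (F : Type*) [Field F] (θ : ℕ) : Set (GL (Fin 4) F) :=
  {g | ∃ t u : F, (↑g : Matrix (Fin 4) (Fin 4) F) = suzXp θ t u}

/-- `U⁻ = {x₋(t,u)}` viewed as a subset of `GL(4,F)`. -/
def suzUm (F : Type*) [Field F] (θ : ℕ) : Set (GL (Fin 4) F) :=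
  {g | ∃ t u : F, (↑g : Matrix (Fin 4) (Fin 4) F) = suzXm θ t u}

lemma suzXm_eq {F : Type*} [Field F] (θ : ℕ) (t u : F) :
    suzXm θ t u = !![1, 0, 0, 0;
      t ^ θ, 1, 0, 0;
      t ^ (θ + 1) + u, t, 1, 0;
      t ^ (2 * θ + 1) + t ^ θ * u + u ^ (2 * θ), u, t ^ θ, 1] := by
  ext i j
  fin_cases i <;> fin_cases j <;>
    simp [suzXm, suzXp, suzW, Matrix.mul_apply, Fin.sum_univ_four,
      show ((3:Fin 4):ℕ) = 3 from rfl, show ((2:Fin 4):ℕ) = 2 from rfl,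
      show ((1:Fin 4):ℕ) = 1 from rfl, show ((0:Fin 4):ℕ) = 0 from rfl]

lemma frob_aux {F : Type*} [Field F] (h2 : (2:F) = 0) (m : ℕ) (x y : F) :
    (x + y) ^ (2 ^ m) = x ^ (2 ^ m) + y ^ (2 ^ m) := by
  induction m with
  | zero => simp
  | succ n ih =>
      rw [pow_succ, pow_mul, pow_mul, pow_mul, ih]
      linear_combination (x ^ (2 ^ n) * y ^ (2 ^ n)) * h2


set_option maxHeartbeats 3200000 in
theorem suzuki_torus_identity (m θ : ℕ) (hθ : θ = 2 ^ m)
    (F : Type*) [Field F] [Fintype F] (hF : Fintype.card F = 2 ^ (2 * m + 1))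
    (ε : F) (hε : ε ≠ 0) :
    suzXp θ 0 1 * suzXm θ 1 (1 + ε ^ θ) *
        suzXp θ (ε ^ (1 - 2 * (θ : ℤ))) (ε ^ (-(θ : ℤ))) =
      suzH θ ε *
        suzXm θ (ε ^ (2 * (θ : ℤ) - 1) * (1 + ε ^ (2 * (θ : ℤ) - 1)))
          (ε + ε ^ θ + ε ^ (2 * θ)) := by
  have hθ0 : θ ≠ 0 := by rw [hθ]; positivity
  have h2 : (2:F) = 0 := by
    have h := FiniteField.cast_card_eq_zero F
    rw [hF] at h; push_cast at h
    exact pow_eq_zero_iff (Nat.succ_ne_zero _) |>.mp h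
  have hb : ε ^ θ ≠ 0 := pow_ne_zero _ hε
  have frobθ : ∀ x y : F, (x + y) ^ θ = x ^ θ + y ^ θ := by
    intro x y; rw [hθ]; exact frob_aux h2 m x y
  have frobθ2 : ∀ x y : F, (x + y) ^ (2 * θ) = x ^ (2 * θ) + y ^ (2 * θ) := by
    intro x y; rw [hθ, show 2 * 2 ^ m = 2 ^ (m + 1) by ring]; exact frob_aux h2 (m+1) x y
  have key : (ε ^ θ) ^ (2 * θ) = ε := by
    rw [← pow_mul, hθ, show 2 ^ m * (2 * 2 ^ m) = 2 ^ (2 * m + 1) by ring, ← hF,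
      FiniteField.pow_card]
  have key2 : (ε ^ θ * ε ^ θ) ^ θ = ε := by
    rw [← pow_add, ← pow_mul, show (θ + θ) * θ = θ * (2 * θ) by ring, pow_mul]
    exact key
  -- zpow rewrites
  have z1 : ε ^ (1 - 2 * (θ : ℤ)) = ε * (ε ^ θ * ε ^ θ)⁻¹ := by
    rw [show (1 - 2 * (θ : ℤ)) = 1 - ((2 * θ : ℕ) : ℤ) by push_cast; ring,
      zpow_sub₀ hε, zpow_one, zpow_natCast, two_mul, pow_add, div_eq_mul_inv]
  have z2 : ε ^ (-(θ : ℤ)) = (ε ^ θ)⁻¹ := by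
    rw [_root_.zpow_neg, zpow_natCast]
  have z3 : ε ^ (2 * (θ : ℤ) - 1) = ε ^ θ * ε ^ θ * ε⁻¹ := by
    rw [show (2 * (θ : ℤ) - 1) = ((2 * θ : ℕ) : ℤ) - 1 by push_cast; ring,
      zpow_sub₀ hε, zpow_one, zpow_natCast, two_mul, pow_add, div_eq_mul_inv]
  -- scalar facts for the C matrix
  have fs1 : (ε * (ε ^ θ * ε ^ θ)⁻¹) ^ θ = ε ^ θ * ε⁻¹ := by
    rw [mul_pow, inv_pow, key2]
  have fs2 : (ε * (ε ^ θ * ε ^ θ)⁻¹) ^ (θ + 1) = (ε ^ θ)⁻¹ := by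
    rw [pow_succ, fs1]; field_simp
  have fs3 : (ε * (ε ^ θ * ε ^ θ)⁻¹) ^ (2 * θ + 1) = ε⁻¹ := by
    rw [pow_succ, mul_comm 2 θ, pow_mul, fs1]; field_simp
  have fs4 : ((ε ^ θ)⁻¹) ^ (2 * θ) = ε⁻¹ := by rw [inv_pow, key]
  have fs5 : (1 + ε ^ θ) ^ (2 * θ) = 1 + ε := by rw [frobθ2, one_pow, key]
  -- scalar facts for the T matrix
  have hε2θ : ε ^ (2 * θ) = ε ^ θ * ε ^ θ := by rw [two_mul, pow_add]
  have ft0 : (ε ^ θ * ε ^ θ * ε⁻¹) ^ θ = ε * (ε ^ θ)⁻¹ := by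
    rw [mul_pow, key2, inv_pow]
  have ftθ : (ε ^ θ * ε ^ θ * ε⁻¹ * (1 + ε ^ θ * ε ^ θ * ε⁻¹)) ^ θ
      = ε * (ε ^ θ)⁻¹ * (1 + ε * (ε ^ θ)⁻¹) := by
    rw [mul_pow, frobθ, one_pow, ft0]
  have ftθ1 : (ε ^ θ * ε ^ θ * ε⁻¹ * (1 + ε ^ θ * ε ^ θ * ε⁻¹)) ^ (θ + 1)
      = ε * (ε ^ θ)⁻¹ * (1 + ε * (ε ^ θ)⁻¹)
        * (ε ^ θ * ε ^ θ * ε⁻¹ * (1 + ε ^ θ * ε ^ θ * ε⁻¹)) := by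
    rw [pow_succ, ftθ]
  have ftθ2 : (ε ^ θ * ε ^ θ * ε⁻¹ * (1 + ε ^ θ * ε ^ θ * ε⁻¹)) ^ (2 * θ + 1)
      = (ε * (ε ^ θ)⁻¹ * (1 + ε * (ε ^ θ)⁻¹)) ^ 2
        * (ε ^ θ * ε ^ θ * ε⁻¹ * (1 + ε ^ θ * ε ^ θ * ε⁻¹)) := by
    rw [pow_succ, mul_comm 2 θ, pow_mul, ftθ]
  have fU : (ε + ε ^ θ + ε ^ (2 * θ)) ^ (2 * θ)
      = ε ^ θ * ε ^ θ + ε + ε * ε := by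
    rw [frobθ2, frobθ2, key, hε2θ, mul_pow, key]
  have hA : suzXp θ (0:F) 1 = !![1,0,1,1; 0,1,0,1; 0,0,1,0; 0,0,0,1] := by
    have e1 : (0:F) ^ θ = 0 := _root_.zero_pow hθ0
    have e2 : (0:F) ^ (2 * θ + 1) = 0 := _root_.zero_pow (by omega)
    have e3 : (0:F) ^ (θ + 1) = 0 := _root_.zero_pow (by omega)
    rw [suzXp, e1, e2, e3]
    norm_num
  have hB : suzXm θ 1 (1 + ε ^ θ) = !![1,0,0,0; 1,1,0,0;
      1 + (1 + ε ^ θ), 1, 1, 0;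
      1 + (1 + ε ^ θ) + (1 + ε), 1 + ε ^ θ, 1, 1] := by
    rw [suzXm_eq, fs5]
    norm_num
  have hC : suzXp θ (ε * (ε ^ θ * ε ^ θ)⁻¹) ((ε ^ θ)⁻¹) =
      !![1, ε ^ θ * ε⁻¹, (ε ^ θ)⁻¹, ε⁻¹ + ε ^ θ * ε⁻¹ * (ε ^ θ)⁻¹ + ε⁻¹;
         0, 1, ε * (ε ^ θ * ε ^ θ)⁻¹, (ε ^ θ)⁻¹ + (ε ^ θ)⁻¹;
         0, 0, 1, ε ^ θ * ε⁻¹;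
         0, 0, 0, 1] := by
    rw [suzXp, fs1, fs2, fs3, fs4]
  have hH : suzH θ ε = !![ε, 0, 0, 0;
      0, ε ^ θ * ε ^ θ * ε⁻¹, 0, 0;
      0, 0, ε * (ε ^ θ * ε ^ θ)⁻¹, 0;
      0, 0, 0, ε⁻¹] := by
    rw [suzH, z1, z3]
    ext i j
    fin_cases i <;> fin_cases j <;> simp [Matrix.diagonal, Matrix.vecHead, Matrix.vecTail]
  have hX : suzXm θ (ε ^ θ * ε ^ θ * ε⁻¹ * (1 + ε ^ θ * ε ^ θ * ε⁻¹))
        (ε + ε ^ θ + ε ^ θ * ε ^ θ) =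
      !![1, 0, 0, 0;
         ε * (ε ^ θ)⁻¹ * (1 + ε * (ε ^ θ)⁻¹), 1, 0, 0;
         ε * (ε ^ θ)⁻¹ * (1 + ε * (ε ^ θ)⁻¹) * (ε ^ θ * ε ^ θ * ε⁻¹ * (1 + ε ^ θ * ε ^ θ * ε⁻¹))
           + (ε + ε ^ θ + ε ^ θ * ε ^ θ),
           ε ^ θ * ε ^ θ * ε⁻¹ * (1 + ε ^ θ * ε ^ θ * ε⁻¹), 1, 0;
         (ε * (ε ^ θ)⁻¹ * (1 + ε * (ε ^ θ)⁻¹)) ^ 2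
             * (ε ^ θ * ε ^ θ * ε⁻¹ * (1 + ε ^ θ * ε ^ θ * ε⁻¹))
           + ε * (ε ^ θ)⁻¹ * (1 + ε * (ε ^ θ)⁻¹) * (ε + ε ^ θ + ε ^ θ * ε ^ θ)
           + (ε ^ θ * ε ^ θ + ε + ε * ε),
           ε + ε ^ θ + ε ^ θ * ε ^ θ,
           ε * (ε ^ θ)⁻¹ * (1 + ε * (ε ^ θ)⁻¹), 1] := by
    have fU' := fU
    rw [hε2θ] at fU'
    rw [suzXm_eq, ftθ, ftθ1, ftθ2, fU']
  have c3 : (3:F) = 1 := by linear_combination (1:F) * h2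
  have c4 : (4:F) = 0 := by linear_combination (2:F) * h2
  have c5 : (5:F) = 1 := by linear_combination (2:F) * h2
  have c6 : (6:F) = 0 := by linear_combination (3:F) * h2
  have c7 : (7:F) = 1 := by linear_combination (3:F) * h2
  have c8 : (8:F) = 0 := by linear_combination (4:F) * h2
  have c9 : (9:F) = 1 := by linear_combination (4:F) * h2
  have c10 : (10:F) = 0 := by linear_combination (5:F) * h2
  have c11 : (11:F) = 1 := by linear_combination (5:F) * h2
  have c12 : (12:F) = 0 := by linear_combination (6:F) * h2
  have c13 : (13:F) = 1 := by linear_combination (6:F) * h2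
  have c14 : (14:F) = 0 := by linear_combination (7:F) * h2
  have c15 : (15:F) = 1 := by linear_combination (7:F) * h2
  have c16 : (16:F) = 0 := by linear_combination (8:F) * h2
  have c17 : (17:F) = 1 := by linear_combination (8:F) * h2
  have c18 : (18:F) = 0 := by linear_combination (9:F) * h2
  have c20 : (20:F) = 0 := by linear_combination (10:F) * h2
  have c24 : (24:F) = 0 := by linear_combination (12:F) * h2
  have c28 : (28:F) = 0 := by linear_combination (14:F) * h2
  have c36 : (36:F) = 0 := by linear_combination (18:F) * h2
  rw [z1, z2, z3, hε2θ, hA, hB, hC, hH, hX]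
  ext i j
  fin_cases i <;> fin_cases j <;>
    · simp [Matrix.mul_apply, Fin.sum_univ_four, Matrix.vecHead, Matrix.vecTail]
      try field_simp
      try ring_nf
      try simp only [h2, c3, c4, c5, c6, c7, c8, c9, c10, c11, c12, c13, c14, c15, c16, c17,
        c18, c20, c24, c28, c36, mul_zero, mul_one, zero_mul, one_mul, add_zero, zero_add]
      try ring_nf
      try field_simp
      try ring_nf
      try simp only [h2, c3, c4, c5, c6, c7, c8, c9, c10, c11, c12, c13, c14, c15, c16, c17,
        c18, c20, c24, c28, c36, mul_zero, mul_one, zero_mul, one_mul, add_zero, zero_add]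
      try ring_nf
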